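/- Let k ≥ 1 and let F be a connected simple graph on a finite vertex set with exactly 4k edges. For a pair partition of the edge set of F into 2k unordered pairs of edges, define its cost as the sum, over the pairs, of the number of vertices incident to at least one of the two edges in the pair. Then the minimum cost over all pair partitions of the edge set of F equals 6k. (In particular, the edge set of a connected simple graph with an even number of edges can be partitioned into pairs of adjacent edges, each such pair covering exactly 3 vertices.) -/

import Mathlib

open Finset

/-- The number of vertices incident to at least one edge of a block `b` of edges. -/
def edgeBlockCost {V : Type*} [Fintype V] [DecidableEq V] (b : Finset (Sym2 V)) : ℕ :=
  (univ.filter fun x : V => ∃ e ∈ b, x ∈ e).card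

namespace EdgePairing
variable {V : Type*} [DecidableEq V]




/-- Adjacency-within-`s` relation on `Sym2 V`. -/
def R (s : Finset (Sym2 V)) (a b : Sym2 V) : Prop :=
  a ∈ s ∧ b ∈ s ∧ a ≠ b ∧ ∃ x, x ∈ a ∧ x ∈ b

lemma R.symm' {s : Finset (Sym2 V)} {a b : Sym2 V} (h : R s a b) : R s b a :=
  ⟨h.2.1, h.1, h.2.2.1.symm, h.2.2.2.imp fun _ hx => ⟨hx.2, hx.1⟩⟩

/-- Reachability within `s` via shared endpoints. -/
def reach (s : Finset (Sym2 V)) : Sym2 V → Sym2 V → Prop :=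
  Relation.ReflTransGen (R s)

lemma reach.symm {s : Finset (Sym2 V)} {a b : Sym2 V} (h : reach s a b) : reach s b a :=
  (@Relation.ReflTransGen.stdSymm _ (R s) ⟨fun _ _ h => R.symm' h⟩).symm _ _ h

lemma reach_mono {s t : Finset (Sym2 V)} (hst : s ⊆ t) {a b} (h : reach s a b) :
    reach t a b :=
  Relation.ReflTransGen.mono (fun _ _ hr => ⟨hst hr.1, hst hr.2.1, hr.2.2⟩) _ _ h

/-- `s` is connected as a set of edges. -/
def Conn (s : Finset (Sym2 V)) : Prop := ∀ a ∈ s, ∀ b ∈ s, reach s a b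

/-- `s` can be partitioned into pairs of adjacent (distinct, sharing a vertex) edges. -/
inductive Paired : Finset (Sym2 V) → Prop
  | empty : Paired ∅
  | insert2 {a b : Sym2 V} {t : Finset (Sym2 V)} (hab : a ≠ b)
      (hadj : ∃ x, x ∈ a ∧ x ∈ b) (ha : a ∉ t) (hb : b ∉ t) (ht : Paired t) :
      Paired (insert a (insert b t))

lemma Paired.union {s t : Finset (Sym2 V)} (hs : Paired s) (ht : Paired t) :
    Disjoint s t → Paired (s ∪ t) := by
  induction hs with
  | empty => intro _; simpa using ht
  | @insert2 a b u hab hadj ha hb hu ih =>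
      intro hd
      rw [insert_union, insert_union]
      have hat : a ∉ t := Finset.disjoint_left.mp hd (by simp)
      have hbt : b ∉ t := Finset.disjoint_left.mp hd (by simp)
      have hd' : Disjoint u t := hd.mono_left (by intro x hx; simp [hx])
      exact .insert2 hab hadj (by simp [ha, hat]) (by simp [hb, hbt]) (ih hd')

lemma Paired.congr {s t : Finset (Sym2 V)} (h : s = t) (hs : Paired s) : Paired t := h ▸ hs

/-- The union of connected components (within `s`) of all edges containing `u`. -/
noncomputable def comp (s : Finset (Sym2 V)) (u : V) : Finset (Sym2 V) :=
  @Finset.filter _ (fun g => ∃ h ∈ s, u ∈ h ∧ reach s h g) (Classical.decPred _) s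

lemma mem_comp {s : Finset (Sym2 V)} {u : V} {g : Sym2 V} :
    g ∈ comp s u ↔ g ∈ s ∧ ∃ h ∈ s, u ∈ h ∧ reach s h g := by
  simp [comp]

lemma comp_subset {s : Finset (Sym2 V)} {u : V} : comp s u ⊆ s :=
  fun _ hg => (mem_comp.mp hg).1

lemma mem_comp_self {s : Finset (Sym2 V)} {u : V} {h : Sym2 V} (hh : h ∈ s) (hu : u ∈ h) :
    h ∈ comp s u := mem_comp.mpr ⟨hh, h, hh, hu, .refl⟩

lemma comp_closed {s : Finset (Sym2 V)} {u : V} {g g' : Sym2 V}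
    (hg : g ∈ comp s u) (h : R s g g') : g' ∈ comp s u := by
  obtain ⟨hgs, h0, h0s, hu, hr⟩ := mem_comp.mp hg
  exact mem_comp.mpr ⟨h.2.1, h0, h0s, hu, hr.tail h⟩

lemma reach_in_comp {s : Finset (Sym2 V)} {u : V} {a b : Sym2 V}
    (ha : a ∈ comp s u) (h : reach s a b) : b ∈ comp s u ∧ reach (comp s u) a b := by
  induction h with
  | refl => exact ⟨ha, .refl⟩
  | tail h1 h2 ih =>
      obtain ⟨hb', hr⟩ := ih
      have hb : _ ∈ comp s u := comp_closed hb' h2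
      exact ⟨hb, hr.tail ⟨hb', hb, h2.2.2⟩⟩

lemma comp_conn {s : Finset (Sym2 V)} {u : V} : Conn (comp s u) := by
  intro a ha b hb
  obtain ⟨has, h1, h1s, hu1, hr1⟩ := mem_comp.mp ha
  obtain ⟨hbs, h2, h2s, hu2, hr2⟩ := mem_comp.mp hb
  have h12 : reach s h1 h2 := by
    rcases eq_or_ne h1 h2 with rfl | hne
    · exact .refl
    · exact Relation.ReflTransGen.single ⟨h1s, h2s, hne, u, hu1, hu2⟩
  have : reach s a b := (hr1.symm.trans h12).trans hr2
  exact (reach_in_comp ha this).2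

lemma conn_of_union {s A B : Finset (Sym2 V)} (hA : Conn A) (hB : Conn B)
    (hU : A ∪ B = s) {x : Sym2 V} (hxA : x ∈ A) (hxB : x ∈ B) : Conn s := by
  subst hU
  have key : ∀ g ∈ A ∪ B, reach (A ∪ B) g x := by
    intro g hg
    rcases mem_union.mp hg with h | h
    · exact reach_mono subset_union_left (hA g h x hxA)
    · exact reach_mono subset_union_right ((hB x hxB g h).symm)
  intro a ha b hb
  exact (key a ha).trans (key b hb).symm

/-- If `g ≠ e` is reachable from `e`, the "last exit" from `e`:
there is an `e`-neighbor `h` with `g` reachable from `h` avoiding `e`. -/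
lemma reach_erase {s : Finset (Sym2 V)} {e g : Sym2 V} (h : reach s e g) (hg : g ≠ e) :
    ∃ h', R s e h' ∧ reach (s.erase e) h' g := by
  induction h with
  | refl => exact absurd rfl hg
  | @tail b c h1 h2 ih =>
      by_cases hbe : b = e
      · subst hbe
        exact ⟨c, h2, .refl⟩
      · obtain ⟨h', hh1, hh2⟩ := ih hbe
        refine ⟨h', hh1, hh2.tail ⟨?_, ?_, h2.2.2⟩⟩
        · exact Finset.mem_erase.mpr ⟨hbe, h2.1⟩
        · exact Finset.mem_erase.mpr ⟨hg, h2.2.1⟩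

/-- Splitting lemma: removing edge `e = s(u,v)` from a connected `s` leaves
everything in the component of `u`-edges or of `v`-edges. -/
lemma split {s : Finset (Sym2 V)} {u v : V} {e : Sym2 V} (hConn : Conn s) (he : e ∈ s)
    (heq : e = s(u, v)) : comp (s.erase e) u ∪ comp (s.erase e) v = s.erase e := by
  apply Finset.Subset.antisymm
  · exact Finset.union_subset comp_subset comp_subset
  · intro g hg
    have hgs : g ∈ s := (Finset.mem_erase.mp hg).2
    have hgne : g ≠ e := (Finset.mem_erase.mp hg).1
    obtain ⟨h', hR, hr⟩ := reach_erase (hConn e he g hgs) hgne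
    have hh's : h' ∈ s.erase e := Finset.mem_erase.mpr ⟨hR.2.2.1.symm, hR.2.1⟩
    obtain ⟨x, hxe, hxh⟩ := hR.2.2.2
    rw [heq, Sym2.mem_iff] at hxe
    rcases hxe with rfl | rfl
    · exact mem_union.mpr (Or.inl (mem_comp.mpr ⟨hg, h', hh's, hxh, hr⟩))
    · exact mem_union.mpr (Or.inr (mem_comp.mpr ⟨hg, h', hh's, hxh, hr⟩))

lemma comp_disjoint_or_eq {s : Finset (Sym2 V)} {u v : V} :
    Disjoint (comp s u) (comp s v) ∨ comp s u = comp s v := by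
  by_cases hd : Disjoint (comp s u) (comp s v)
  · exact Or.inl hd
  · right
    obtain ⟨x, hxu, hxv⟩ := Finset.not_disjoint_iff.mp hd
    apply Finset.Subset.antisymm <;> intro g hg
    · have h1 : reach s x g := (Relation.ReflTransGen.mono
        (fun _ _ hr => ⟨comp_subset hr.1, comp_subset hr.2.1, hr.2.2⟩) _ _ (comp_conn x hxu g hg))
      exact (reach_in_comp hxv h1).1
    · have h1 : reach s x g := (Relation.ReflTransGen.mono
        (fun _ _ hr => ⟨comp_subset hr.1, comp_subset hr.2.1, hr.2.2⟩) _ _ (comp_conn x hxv g hg))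
      exact (reach_in_comp hxu h1).1


lemma comp_wit {s : Finset (Sym2 V)} {w : V} (h : comp s w ≠ ∅) : ∃ h' ∈ comp s w, w ∈ h' := by
  obtain ⟨g, hg⟩ := nonempty_of_ne_empty h
  obtain ⟨-, h', hh', hwh', -⟩ := mem_comp.mp hg
  exact ⟨h', mem_comp_self hh' hwh', hwh'⟩

lemma assemble1 {s : Finset (Sym2 V)} {e f : Sym2 V} {w : V} (he : e ∈ s)
    (hf : f ∈ s.erase e) (hwe : w ∈ e) (hwf : w ∈ f)
    (hp : Paired ((s.erase e).erase f)) : Paired s := by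
  have hfe : f ≠ e := (Finset.mem_erase.mp hf).1
  have heq : s = insert e (insert f ((s.erase e).erase f)) := by
    rw [Finset.insert_erase hf, Finset.insert_erase he]
  refine heq ▸ Paired.insert2 hfe.symm ⟨w, hwe, hwf⟩ ?_ ?_ hp
  · exact fun h => Finset.notMem_erase e s (Finset.erase_subset _ _ h)
  · exact Finset.notMem_erase f _

lemma assemble2 {s X Y : Finset (Sym2 V)} {e f : Sym2 V} {w : V}
    (he : e ∈ s) (hXY : X ∪ Y = s.erase e) (hd : Disjoint X Y)
    (hf : f ∈ X) (hwe : w ∈ e) (hwf : w ∈ f)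
    (hpX : Paired (X.erase f)) (hpY : Paired Y) : Paired s := by
  have h1 : Paired (X.erase f ∪ Y) := hpX.union hpY (hd.mono_left (Finset.erase_subset _ _))
  have hfs' : f ∈ s.erase e := hXY ▸ (mem_union.mpr (Or.inl hf))
  have hef : e ≠ f := fun h => Finset.notMem_erase e s (h ▸ hfs')
  have heq : s = insert e (insert f (X.erase f ∪ Y)) := by
    rw [← Finset.insert_union, Finset.insert_erase hf, hXY, Finset.insert_erase he]
  refine heq ▸ Paired.insert2 hef ⟨w, hwe, hwf⟩ ?_ ?_ h1
  · intro h
    have : e ∈ s.erase e := hXY ▸ (Finset.union_subset_union (Finset.erase_subset _ _)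
      (Finset.Subset.refl _) h)
    exact Finset.notMem_erase e s this
  · intro h
    rcases mem_union.mp h with h | h
    · exact Finset.notMem_erase f X h
    · exact Finset.disjoint_left.mp hd hf h

lemma key (n : ℕ) : ∀ s : Finset (Sym2 V), s.card ≤ n → Conn s →
    (Even s.card → Paired s) ∧
    (¬ Even s.card → ∀ r : V, (∃ e ∈ s, r ∈ e) →
      ∃ e ∈ s, r ∈ e ∧ Paired (s.erase e)) := by
  induction n with
  | zero =>
      intro s hcard _
      have hs : s = ∅ := card_eq_zero.mp (Nat.le_zero.mp hcard)
      subst hs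
      exact ⟨fun _ => .empty, fun h => absurd (by simp) h⟩
  | succ n ih =>
      intro s hcard hConn
      constructor
      · -- even branch
        intro heven
        rcases s.eq_empty_or_nonempty with rfl | ⟨e, he⟩
        · exact .empty
        obtain ⟨u, v, rfl⟩ : ∃ u v, e = s(u, v) := by
          obtain ⟨⟨u, v⟩, rfl⟩ := e.exists_rep; exact ⟨u, v, rfl⟩
        set e := s(u, v) with he_def
        have hc1 : s.card = (s.erase e).card + 1 := (card_erase_add_one he).symm
        have hodd' : ¬ Even (s.erase e).card := by
          rw [hc1, Nat.even_add_one] at heven; exact heven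
        have hcard'' : (s.erase e).card ≤ n := by omega
        have hne' : (s.erase e).Nonempty := by
          rw [← Finset.card_pos]
          rcases Nat.eq_zero_or_pos (s.erase e).card with h | h
          · exact absurd (h ▸ Even.zero) hodd'
          · exact h
        have hsplit : comp (s.erase e) u ∪ comp (s.erase e) v = s.erase e :=
          split hConn he rfl
        have finishConn : ∀ w : V, w ∈ e → Conn (s.erase e) →
            (∃ h ∈ s.erase e, w ∈ h) → Paired s := by
          intro w hw hc hwit
          obtain ⟨f, hf, hwf, hp⟩ := (ih _ hcard'' hc).2 hodd' w hwit
          exact assemble1 he hf hw hwf hp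
        by_cases hA0 : comp (s.erase e) u = ∅
        · have hBs : comp (s.erase e) v = s.erase e := by
            have h := hsplit; rwa [hA0, empty_union] at h
          have hc : Conn (s.erase e) := by rw [← hBs]; exact comp_conn
          have hB0 : comp (s.erase e) v ≠ ∅ := by
            rw [hBs]; exact hne'.ne_empty
          obtain ⟨h', hh', hvh'⟩ := comp_wit hB0
          exact finishConn v (by simp [he_def]) hc ⟨h', comp_subset hh', hvh'⟩
        by_cases hB0 : comp (s.erase e) v = ∅
        · have hAs : comp (s.erase e) u = s.erase e := by
            have h := hsplit; rwa [hB0, union_empty] at h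
          have hc : Conn (s.erase e) := by rw [← hAs]; exact comp_conn
          obtain ⟨h', hh', huh'⟩ := comp_wit hA0
          exact finishConn u (by simp [he_def]) hc ⟨h', comp_subset hh', huh'⟩
        rcases comp_disjoint_or_eq (s := s.erase e) (u := u) (v := v) with hdisj | heqc
        · -- two components
          have hcards : (comp (s.erase e) u).card + (comp (s.erase e) v).card
              = (s.erase e).card := by
            rw [← card_union_of_disjoint hdisj, hsplit]
          have hAn : (comp (s.erase e) u).card ≤ n :=
            le_trans (card_le_card comp_subset) hcard''
          have hBn : (comp (s.erase e) v).card ≤ n :=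
            le_trans (card_le_card comp_subset) hcard''
          by_cases hAe : Even (comp (s.erase e) u).card
          · have hBo : ¬ Even (comp (s.erase e) v).card := fun h =>
              hodd' (hcards ▸ hAe.add h)
            obtain ⟨h', hh', hvh'⟩ := comp_wit hB0
            obtain ⟨f, hfB, hvf, hpB⟩ := (ih _ hBn comp_conn).2 hBo v ⟨h', hh', hvh'⟩
            have hpA : Paired (comp (s.erase e) u) := (ih _ hAn comp_conn).1 hAe
            exact assemble2 he (by rw [union_comm] at hsplit; exact hsplit) hdisj.symm
              hfB (by simp [he_def]) hvf hpB hpA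
          · have hBe : Even (comp (s.erase e) v).card := by
              by_contra hBo
              rw [Nat.not_even_iff_odd] at hAe hBo
              exact hodd' (hcards ▸ hAe.add_odd hBo)
            obtain ⟨h', hh', huh'⟩ := comp_wit hA0
            obtain ⟨f, hfA, huf, hpA⟩ := (ih _ hAn comp_conn).2 hAe u ⟨h', hh', huh'⟩
            have hpB : Paired (comp (s.erase e) v) := (ih _ hBn comp_conn).1 hBe
            exact assemble2 he hsplit hdisj hfA (by simp [he_def]) huf hpA hpB
        · -- equal components
          have hAs : comp (s.erase e) u = s.erase e := by
            rw [heqc]; have h := hsplit; rwa [heqc, union_self] at h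
          have hc : Conn (s.erase e) := by rw [← hAs]; exact comp_conn
          obtain ⟨h', hh', huh'⟩ := comp_wit hA0
          exact finishConn u (by simp [he_def]) hc ⟨h', comp_subset hh', huh'⟩
      · -- odd branch
        intro hodd r ⟨e, he, hre⟩
        obtain ⟨u, rfl⟩ : ∃ u, e = s(r, u) := Sym2.mem_iff_exists.mp hre
        set e := s(r, u) with he_def
        have hc1 : s.card = (s.erase e).card + 1 := (card_erase_add_one he).symm
        have heven' : Even (s.erase e).card := by
          rw [hc1, Nat.even_add_one, not_not] at hodd; exact hodd
        have hcard'' : (s.erase e).card ≤ n := by omega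
        have hsplit : comp (s.erase e) r ∪ comp (s.erase e) u = s.erase e :=
          split hConn he rfl
        have finishC : Conn (s.erase e) → ∃ e' ∈ s, r ∈ e' ∧ Paired (s.erase e') :=
          fun hc => ⟨e, he, hre, (ih _ hcard'' hc).1 heven'⟩
        rcases (s.erase e).eq_empty_or_nonempty with hse | hne'
        · exact ⟨e, he, hre, Paired.congr hse.symm .empty⟩
        by_cases hA0 : comp (s.erase e) r = ∅
        · refine finishC ?_
          have hBs : comp (s.erase e) u = s.erase e := by
            have h := hsplit; rwa [hA0, empty_union] at h
          rw [← hBs]; exact comp_conn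
        by_cases hB0 : comp (s.erase e) u = ∅
        · refine finishC ?_
          have hAs : comp (s.erase e) r = s.erase e := by
            have h := hsplit; rwa [hB0, union_empty] at h
          rw [← hAs]; exact comp_conn
        rcases comp_disjoint_or_eq (s := s.erase e) (u := r) (v := u) with hdisj | heqc
        · have hcards : (comp (s.erase e) r).card + (comp (s.erase e) u).card
              = (s.erase e).card := by
            rw [← card_union_of_disjoint hdisj, hsplit]
          have hAn : (comp (s.erase e) r).card ≤ n :=
            le_trans (card_le_card comp_subset) hcard''
          have hBn : (comp (s.erase e) u).card ≤ n :=
            le_trans (card_le_card comp_subset) hcard''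
          by_cases hAe : Even (comp (s.erase e) r).card
          · -- both even
            have hBe : Even (comp (s.erase e) u).card := by
              rcases Nat.even_or_odd (comp (s.erase e) u).card with h | h
              · exact h
              · exfalso
                rw [← hcards, Nat.even_add] at heven'
                exact (Nat.not_even_iff_odd.mpr h) (heven'.mp hAe)
            have hpA : Paired (comp (s.erase e) r) := (ih _ hAn comp_conn).1 hAe
            have hpB : Paired (comp (s.erase e) u) := (ih _ hBn comp_conn).1 hBe
            exact ⟨e, he, hre, Paired.congr hsplit (hpA.union hpB hdisj)⟩
          · -- both odd
            have hBo : ¬ Even (comp (s.erase e) u).card := by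
              intro h
              rw [← hcards, Nat.even_add] at heven'
              exact hAe (heven'.mpr h)
            obtain ⟨hA', hhA', hrhA'⟩ := comp_wit hA0
            obtain ⟨hB', hhB', huhB'⟩ := comp_wit hB0
            obtain ⟨f, hfB, huf, hpB⟩ := (ih _ hBn comp_conn).2 hBo u ⟨hB', hhB', huhB'⟩
            obtain ⟨g, hgA, hrg, hpA⟩ := (ih _ hAn comp_conn).2 hAe r ⟨hA', hhA', hrhA'⟩
            have hgs' : g ∈ s.erase e := comp_subset hgA
            have hge : g ≠ e := (Finset.mem_erase.mp hgs').1
            refine ⟨g, Finset.mem_of_mem_erase hgs', hrg, ?_⟩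
            have hpt : Paired ((comp (s.erase e) u).erase f ∪ (comp (s.erase e) r).erase g) :=
              hpB.union hpA ((hdisj.symm).mono (Finset.erase_subset _ _) (Finset.erase_subset _ _))
            have hfs' : f ∈ s.erase e := comp_subset hfB
            have hef : e ≠ f := fun h => Finset.notMem_erase e s (h ▸ hfs')
            have heq : s.erase g = insert e (insert f
                ((comp (s.erase e) u).erase f ∪ (comp (s.erase e) r).erase g)) := by
              have hgB : g ∉ comp (s.erase e) u := Finset.disjoint_left.mp hdisj hgA
              rw [← Finset.insert_union, Finset.insert_erase hfB]
              have h1 : (s.erase e).erase g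
                  = (comp (s.erase e) r).erase g ∪ comp (s.erase e) u := by
                conv_lhs => rw [← hsplit]
                rw [Finset.erase_union_distrib, Finset.erase_eq_of_notMem hgB]
              rw [union_comm ((comp (s.erase e) u)) _, ← h1,
                ← Finset.erase_insert_of_ne hge.symm, Finset.insert_erase he]
            exact Paired.congr heq.symm (Paired.insert2 hef ⟨u, by simp [he_def], huf⟩
              (fun h => by
                have hin : e ∈ s.erase e := by
                  rcases mem_union.mp h with h | h
                  · exact comp_subset (Finset.mem_of_mem_erase h)
                  · exact comp_subset (Finset.mem_of_mem_erase h)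
                exact (Finset.mem_erase.mp hin).1 rfl)
              (fun h => by
                rcases mem_union.mp h with h | h
                · exact Finset.notMem_erase f _ h
                · exact Finset.disjoint_left.mp hdisj.symm hfB (Finset.mem_of_mem_erase h))
              hpt)
        · refine finishC ?_
          have hAs : comp (s.erase e) r = s.erase e := by
            rw [heqc]; have h := hsplit; rwa [heqc, union_self] at h
          rw [← hAs]; exact comp_conn


lemma paired_parts {s : Finset (Sym2 V)} (h : Paired s) :
    ∃ Q : Finset (Finset (Sym2 V)), Q.sup id = s ∧
      (Q : Set (Finset (Sym2 V))).PairwiseDisjoint id ∧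
      ∀ p ∈ Q, ∃ a c : Sym2 V, a ≠ c ∧ (∃ x, x ∈ a ∧ x ∈ c) ∧ p = {a, c} := by
  induction h with
  | empty => exact ⟨∅, by simp, by simp, by simp⟩
  | @insert2 a c t hac hadj ha hc ht ih =>
      obtain ⟨Q, hsup, hdisj, hshape⟩ := ih
      refine ⟨insert {a, c} Q, ?_, ?_, ?_⟩
      · rw [Finset.sup_insert, hsup]
        ext x; simp [id]
      · rw [coe_insert]
        refine Set.PairwiseDisjoint.insert hdisj ?_
        intro q hq _
        have hqt : q ⊆ t := hsup ▸ Finset.le_sup (f := id) hq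
        simp only [id, Finset.disjoint_left]
        intro x hx hxq
        rcases mem_insert.mp hx with rfl | hx
        · exact ha (hqt hxq)
        · rw [mem_singleton] at hx; subst hx; exact hc (hqt hxq)
      · intro p hp
        rcases mem_insert.mp hp with rfl | hp
        · exact ⟨a, c, hac, hadj, rfl⟩
        · exact hshape p hp

lemma walk_reach [Fintype V] {F : SimpleGraph V} [DecidableRel F.Adj] :
    ∀ {x y : V}, F.Walk x y → ∀ a ∈ F.edgeFinset, x ∈ a →
    ∀ b ∈ F.edgeFinset, y ∈ b → reach F.edgeFinset a b := by
  intro x y p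
  induction p with
  | nil =>
      intro a ha hxa b hb hxb
      rcases eq_or_ne a b with rfl | hne
      · exact .refl
      · exact Relation.ReflTransGen.single ⟨ha, hb, hne, _, hxa, hxb⟩
  | @cons x z y hadj p ih =>
      intro a ha hxa b hb hyb
      have hg : s(x, z) ∈ F.edgeFinset := by
        rw [SimpleGraph.mem_edgeFinset, SimpleGraph.mem_edgeSet]; exact hadj
      have h1 : reach F.edgeFinset a s(x, z) := by
        rcases eq_or_ne a s(x, z) with rfl | hne
        · exact .refl
        · exact Relation.ReflTransGen.single ⟨ha, hg, hne, x, hxa, Sym2.mem_mk_left x z⟩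
      exact h1.trans (ih s(x, z) hg (Sym2.mem_mk_right x z) b hb hyb)

lemma conn_edgeFinset [Fintype V] {F : SimpleGraph V} [DecidableRel F.Adj] (h : F.Connected) :
    Conn F.edgeFinset := by
  intro a ha b hb
  obtain ⟨x, y, rfl⟩ : ∃ x y, a = s(x, y) := by
    obtain ⟨⟨x, y⟩, rfl⟩ := a.exists_rep; exact ⟨x, y, rfl⟩
  obtain ⟨p, q, rfl⟩ : ∃ p q, b = s(p, q) := by
    obtain ⟨⟨p, q⟩, rfl⟩ := b.exists_rep; exact ⟨p, q, rfl⟩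
  obtain ⟨w⟩ := h.preconnected x p
  exact walk_reach w _ ha (Sym2.mem_mk_left x y) _ hb (Sym2.mem_mk_left p q)

lemma cost_pair_eq_three [Fintype V] {a c : Sym2 V} (hnda : ¬a.IsDiag) (hndc : ¬c.IsDiag)
    (hac : a ≠ c) (hadj : ∃ x, x ∈ a ∧ x ∈ c) : edgeBlockCost ({a, c} : Finset (Sym2 V)) = 3 := by
  obtain ⟨w, hwa, hwc⟩ := hadj
  obtain ⟨y, rfl⟩ := Sym2.mem_iff_exists.mp hwa
  obtain ⟨z, rfl⟩ := Sym2.mem_iff_exists.mp hwc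
  have hwy : w ≠ y := by simpa using hnda
  have hwz : w ≠ z := by simpa using hndc
  have hyz : y ≠ z := fun h => hac (by rw [h])
  have hfilter : (univ.filter fun x : V =>
      ∃ e ∈ ({s(w, y), s(w, z)} : Finset (Sym2 V)), x ∈ e) = {w, y, z} := by
    ext x
    simp [Sym2.mem_iff]
    tauto
  rw [edgeBlockCost, hfilter]
  rw [card_insert_of_notMem (by simp [hwy, hwz]),
    card_insert_of_notMem (by simp [hyz]), card_singleton]

lemma three_le_cost [Fintype V] {a c : Sym2 V} (hnda : ¬a.IsDiag) (hndc : ¬c.IsDiag)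
    (hac : a ≠ c) : 3 ≤ edgeBlockCost ({a, c} : Finset (Sym2 V)) := by
  obtain ⟨p, q, rfl⟩ : ∃ p q, a = s(p, q) := by
    obtain ⟨⟨p, q⟩, rfl⟩ := a.exists_rep; exact ⟨p, q, rfl⟩
  obtain ⟨c1, c2, rfl⟩ : ∃ x y, c = s(x, y) := by
    obtain ⟨⟨x, y⟩, rfl⟩ := c.exists_rep; exact ⟨x, y, rfl⟩
  have hpq : p ≠ q := by simpa using hnda
  have hc12 : c1 ≠ c2 := by simpa using hndc
  have hm : ∃ m, m ∈ s(c1, c2) ∧ m ≠ p ∧ m ≠ q := by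
    by_cases h1 : c1 ≠ p ∧ c1 ≠ q
    · exact ⟨c1, Sym2.mem_mk_left _ _, h1.1, h1.2⟩
    · have h1' : c1 = p ∨ c1 = q := by tauto
      rcases h1' with h1' | h1'
      · refine ⟨c2, Sym2.mem_mk_right _ _, ?_, ?_⟩
        · intro h2; exact hc12 (h1'.trans h2.symm)
        · intro h2; exact hac (by rw [h1', h2])
      · refine ⟨c2, Sym2.mem_mk_right _ _, ?_, ?_⟩
        · intro h2; exact hac (by rw [h1', h2, Sym2.eq_swap])
        · intro h2; exact hc12 (h1'.trans h2.symm)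
  obtain ⟨m, hmc, hmp, hmq⟩ := hm
  have hsub : ({p, q, m} : Finset V) ⊆ univ.filter fun x : V =>
      ∃ e ∈ ({s(p, q), s(c1, c2)} : Finset (Sym2 V)), x ∈ e := by
    intro x hx
    simp only [mem_insert, mem_singleton] at hx
    simp only [mem_filter, mem_univ, true_and]
    rcases hx with h | h | h
    · exact ⟨s(p, q), by simp, by rw [h]; exact Sym2.mem_mk_left _ _⟩
    · exact ⟨s(p, q), by simp, by rw [h]; exact Sym2.mem_mk_right _ _⟩
    · exact ⟨s(c1, c2), by simp, by rw [h]; exact hmc⟩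
  have hc3 : ({p, q, m} : Finset V).card = 3 := by
    rw [card_insert_of_notMem, card_insert_of_notMem, card_singleton]
    · intro h; exact hmq (mem_singleton.mp h).symm
    · intro h
      rcases mem_insert.mp h with h | h
      · exact hpq h
      · exact hmp (mem_singleton.mp h).symm
  calc 3 = ({p, q, m} : Finset V).card := hc3.symm
      _ ≤ _ := card_le_card hsub
end EdgePairing

/-- For a connected simple graph `F` with exactly `4k` edges (`k ≥ 1`), the minimum,
over all partitions of the edge set into blocks of two edges, of the total number of
vertices covered by the blocks equals `6k`. -/
theorem min_edge_pairing_cost (k : ℕ) (hk : 1 ≤ k) {V : Type*} [Fintype V]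
    [DecidableEq V] (F : SimpleGraph V) [DecidableRel F.Adj]
    (hconn : F.Connected) (hcard : F.edgeFinset.card = 4 * k) :
    (∃ P : Finpartition F.edgeFinset, (∀ b ∈ P.parts, b.card = 2) ∧
      ∑ b ∈ P.parts, edgeBlockCost b = 6 * k) ∧
    (∀ P : Finpartition F.edgeFinset, (∀ b ∈ P.parts, b.card = 2) →
      6 * k ≤ ∑ b ∈ P.parts, edgeBlockCost b) := by
  have hnd : ∀ e ∈ F.edgeFinset, ¬ e.IsDiag := fun e he =>
    F.not_isDiag_of_mem_edgeSet (SimpleGraph.mem_edgeFinset.mp he)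
  constructor
  · -- existence of an optimal partition
    have heven : Even F.edgeFinset.card := by rw [hcard]; exact ⟨2 * k, by ring⟩
    have hpaired := (EdgePairing.key F.edgeFinset.card F.edgeFinset le_rfl
      (EdgePairing.conn_edgeFinset hconn)).1 heven
    obtain ⟨Q, hsup, hdisj, hshape⟩ := EdgePairing.paired_parts hpaired
    have hnb : ⊥ ∉ Q := by
      intro h
      obtain ⟨a, c, -, -, hpe⟩ := hshape _ h
      rw [Finset.bot_eq_empty] at hpe
      exact (Finset.insert_ne_empty a {c}) hpe.symm
    have hsub : ∀ b ∈ Q, b ⊆ F.edgeFinset := fun b hb => hsup ▸ Finset.le_sup (f := id) hb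
    have hcards2 : ∀ b ∈ Q, b.card = 2 := by
      intro b hb
      obtain ⟨a, c, hac, -, rfl⟩ := hshape b hb
      rw [card_insert_of_notMem (by simpa using hac), card_singleton]
    have hcost : ∀ b ∈ Q, edgeBlockCost b = 3 := by
      intro b hb
      obtain ⟨a, c, hac, hadj, rfl⟩ := hshape b hb
      exact EdgePairing.cost_pair_eq_three (hnd a (hsub _ hb (by simp)))
        (hnd c (hsub _ hb (by simp))) hac hadj
    refine ⟨⟨Q, Finset.supIndep_iff_pairwiseDisjoint.mpr hdisj, hsup, hnb⟩, hcards2, ?_⟩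
    show ∑ b ∈ Q, edgeBlockCost b = 6 * k
    have h1 : ∑ b ∈ Q, b.card = 4 * k := by
      have h := Finpartition.sum_card_parts
        (⟨Q, Finset.supIndep_iff_pairwiseDisjoint.mpr hdisj, hsup, hnb⟩ :
          Finpartition F.edgeFinset)
      rw [hcard] at h
      exact h
    have h2 : ∑ b ∈ Q, b.card = Q.card * 2 := by
      rw [Finset.sum_congr rfl hcards2, Finset.sum_const, smul_eq_mul]
    have hQc : Q.card = 2 * k := by omega
    calc ∑ b ∈ Q, edgeBlockCost b = ∑ _b ∈ Q, 3 := Finset.sum_congr rfl hcost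
      _ = Q.card * 3 := by rw [Finset.sum_const, smul_eq_mul]
      _ = 6 * k := by omega
  · -- lower bound
    intro P hP2
    have hsub : ∀ b ∈ P.parts, b ⊆ F.edgeFinset := fun b hb => P.le hb
    have h3 : ∀ b ∈ P.parts, 3 ≤ edgeBlockCost b := by
      intro b hb
      obtain ⟨a, c, hac, rfl⟩ := Finset.card_eq_two.mp (hP2 b hb)
      exact EdgePairing.three_le_cost (hnd a (hsub _ hb (by simp)))
        (hnd c (hsub _ hb (by simp))) hac
    have h1 : ∑ b ∈ P.parts, b.card = 4 * k := by rw [P.sum_card_parts, hcard]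
    have h2 : ∑ b ∈ P.parts, b.card = P.parts.card * 2 := by
      rw [Finset.sum_congr rfl hP2, Finset.sum_const, smul_eq_mul]
    have hQc : P.parts.card = 2 * k := by omega
    calc 6 * k = P.parts.card * 3 := by omega
      _ = ∑ _b ∈ P.parts, 3 := by rw [Finset.sum_const, smul_eq_mul]
      _ ≤ ∑ b ∈ P.parts, edgeBlockCost b := Finset.sum_le_sum h3
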